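/- Let Ω be a p×p real symmetric positive definite matrix with all diagonal entries equal to 1 and |Ω(i,j)| ≤ 4√2 − 5 for all i ≠ j. Let ϑ > 0 and r satisfy ϑ < r < (3 + 2√2)ϑ. Then for every pair of disjoint subsets D, F of {1,…,p} with D nonempty, ρ(D, F; Ω) ≥ (ϑ + r)²/(4r). -/

import Mathlib

open Matrix

/-- `ω(D,F;Ω)`: the minimum (infimum) of
`ξᵀ(Ω_{D,D} − Ω_{D,F}(Ω_{F,F})⁻¹Ω_{F,D})ξ` over vectors `ξ ∈ ℝ^D` with `|ξ_i| ≥ 1`. -/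
noncomputable def omegaDF {p : ℕ} (Ω : Matrix (Fin p) (Fin p) ℝ)
    (D F : Finset (Fin p)) : ℝ :=
  sInf {q : ℝ | ∃ ξ : ↥D → ℝ, (∀ i, 1 ≤ |ξ i|) ∧
    q = ξ ⬝ᵥ ((Ω.submatrix (fun i : ↥D => (i : Fin p)) (fun j : ↥D => (j : Fin p))
        - Ω.submatrix (fun i : ↥D => (i : Fin p)) (fun j : ↥F => (j : Fin p))
          * (Ω.submatrix (fun i : ↥F => (i : Fin p)) (fun j : ↥F => (j : Fin p)))⁻¹
          * Ω.submatrix (fun i : ↥F => (i : Fin p)) (fun j : ↥D => (j : Fin p))) *ᵥ ξ)}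

/-- `ρ(D,F;Ω)` with parameters `ϑ, r`. -/
noncomputable def rhoDF {p : ℕ} (Ω : Matrix (Fin p) (Fin p) ℝ) (ϑ r : ℝ)
    (D F : Finset (Fin p)) : ℝ :=
  if Even D.card then
    ((D.card : ℝ) + 2 * F.card) * ϑ / 2 + omegaDF Ω D F * r / 4
  else
    ((D.card : ℝ) + 2 * F.card) * ϑ / 2 + ϑ / 2 +
      (max (Real.sqrt (omegaDF Ω D F * r) - ϑ / Real.sqrt (omegaDF Ω D F * r)) 0) ^ 2 / 4


lemma sum_push {α n : Type*} [Fintype α] [Fintype n] [DecidableEq n]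
    (e : α → n) (x : α → ℝ) (g : n → ℝ) :
    ∑ j, (∑ i, if j = e i then x i else 0) * g j = ∑ i, x i * g (e i) := by
  simp only [Finset.sum_mul, ite_mul, zero_mul]
  rw [Finset.sum_comm]
  simp

lemma posDef_submatrix' {α n : Type*} [Fintype α] [Fintype n] [DecidableEq n]
    {M : Matrix n n ℝ} (hM : M.PosDef) (e : α → n) (he : Function.Injective e) :
    (M.submatrix e e).PosDef := by
  refine posDef_iff_dotProduct_mulVec.mpr ⟨hM.1.submatrix e, fun x hx => ?_⟩
  let y : n → ℝ := fun j => ∑ i, if j = e i then x i else 0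
  have hyg : ∀ g : n → ℝ, ∑ j, y j * g j = ∑ i, x i * g (e i) := fun g => sum_push e x g
  have hyval : ∀ i, y (e i) = x i := by
    intro i
    show (∑ i' : α, if e i = e i' then x i' else 0) = x i
    rw [Finset.sum_eq_single i (fun b _ hb => if_neg (fun h => hb (he h).symm))
      (fun h => absurd (Finset.mem_univ i) h), if_pos rfl]
  have hy0 : y ≠ 0 := by
    obtain ⟨i, hi⟩ := Function.ne_iff.mp hx
    intro h
    exact hi (by rw [← hyval i, h]; rfl)
  have key : x ⬝ᵥ ((M.submatrix e e) *ᵥ x) = y ⬝ᵥ (M *ᵥ y) := by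
    simp only [dotProduct, mulVec, submatrix_apply]
    conv_rhs => rw [hyg (fun j => ∑ j', M j j' * y j')]
    refine Finset.sum_congr rfl fun i _ => ?_
    congr 1
    rw [show ∑ j', M (e i) j' * y j' = ∑ j', y j' * M (e i) j' from by
        exact Finset.sum_congr rfl fun _ _ => mul_comm _ _,
      hyg (fun j' => M (e i) j')]
    exact Finset.sum_congr rfl fun _ _ => mul_comm _ _
  have hq := (posDef_iff_dotProduct_mulVec.mp hM).2 hy0
  simp only [star_trivial] at hq ⊢
  rw [key]
  exact hq

lemma schur_psd {p : ℕ} (Ω : Matrix (Fin p) (Fin p) ℝ) (hpd : Ω.PosDef)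
    (D F : Finset (Fin p)) (hDF : Disjoint D F) :
    (Ω.submatrix (fun i : ↥D => (i : Fin p)) (fun j : ↥D => (j : Fin p))
        - Ω.submatrix (fun i : ↥D => (i : Fin p)) (fun j : ↥F => (j : Fin p))
          * (Ω.submatrix (fun i : ↥F => (i : Fin p)) (fun j : ↥F => (j : Fin p)))⁻¹
          * Ω.submatrix (fun i : ↥F => (i : Fin p)) (fun j : ↥D => (j : Fin p))).PosSemidef := by
  classical
  set fD : ↥D → Fin p := fun i => (i : Fin p) with hfD
  set fF : ↥F → Fin p := fun j => (j : Fin p) with hfF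
  have hH : (Ω.submatrix fD fF)ᴴ = Ω.submatrix fF fD := by
    rw [conjTranspose_submatrix, hpd.1]
  have hC : (Ω.submatrix fF fF).PosDef := by
    refine posDef_submatrix' hpd fF ?_
    intro a b h
    exact Subtype.ext h
  haveI : Invertible (Ω.submatrix fF fF) := hC.isUnit.invertible
  have hg : Function.Injective (Sum.elim fD fF) := by
    rintro (a | a) (b | b) h
    · exact congrArg Sum.inl (Subtype.ext h)
    · simp only [Sum.elim_inl, Sum.elim_inr] at h
      exact absurd (show (a : Fin p) ∈ F by rw [show ((a : Fin p)) = (b : Fin p) from h]; exact b.2)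
        (Finset.disjoint_left.mp hDF a.2)
    · simp only [Sum.elim_inl, Sum.elim_inr] at h
      exact absurd (show (b : Fin p) ∈ F by rw [show ((b : Fin p)) = (a : Fin p) from h.symm]; exact a.2)
        (Finset.disjoint_left.mp hDF b.2)
    · exact congrArg Sum.inr (Subtype.ext h)
  have hblock : Ω.submatrix (Sum.elim fD fF) (Sum.elim fD fF)
      = fromBlocks (Ω.submatrix fD fD) (Ω.submatrix fD fF)
          (Ω.submatrix fD fF)ᴴ (Ω.submatrix fF fF) := by
    rw [hH]
    ext (i | i) (j | j) <;> rfl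
  have hpsd : (fromBlocks (Ω.submatrix fD fD) (Ω.submatrix fD fF)
      (Ω.submatrix fD fF)ᴴ (Ω.submatrix fF fF)).PosSemidef :=
    hblock ▸ (posDef_submatrix' hpd _ hg).posSemidef
  have hres := (PosDef.fromBlocks₂₂ (Ω.submatrix fD fD) (Ω.submatrix fD fF) hC).mp hpsd
  rwa [hH] at hres

set_option maxHeartbeats 1000000 in
theorem rho_lower_bound_cor_entrywise1
    (p : ℕ) (Ω : Matrix (Fin p) (Fin p) ℝ) (hsymm : Ω.IsSymm) (hpd : Ω.PosDef)
    (hdiag : ∀ i, Ω i i = 1)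
    (hoff : ∀ i j, i ≠ j → |Ω i j| ≤ 4 * Real.sqrt 2 - 5)
    (ϑ r : ℝ) (h0 : 0 < ϑ) (h1 : ϑ < r) (h2 : r < (3 + 2 * Real.sqrt 2) * ϑ)
    (D F : Finset (Fin p)) (hD : D.Nonempty) (hDF : Disjoint D F) :
    (ϑ + r) ^ 2 / (4 * r) ≤ rhoDF Ω ϑ r D F := by
  classical
  have hr : (0:ℝ) < r := lt_trans h0 h1
  have hr4 : (0:ℝ) < 4 * r := by linarith
  set s2 := Real.sqrt 2 with hs2def
  have hs2sq : s2 ^ 2 = 2 := Real.sq_sqrt (by norm_num)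
  have hs2pos : 0 < s2 := Real.sqrt_pos.mpr (by norm_num)
  clear_value s2
  have hs2lt : s2 < 1.5 := by nlinarith
  have hs2gt : 1 < s2 := by nlinarith
  have h3 : (0:ℝ) < 3 - 2 * s2 := by nlinarith
  have hx : (3 - 2 * s2) * r < ϑ := by nlinarith [mul_lt_mul_of_pos_left h2 h3]
  have h8 : (ϑ + r) ^ 2 < 8 * ϑ * r := by
    nlinarith [mul_pos (sub_pos.mpr h2) (show (0:ℝ) < r - (3 - 2 * s2) * ϑ by nlinarith)]
  unfold rhoDF
  set w := omegaDF Ω D F with hw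
  clear_value w
  -- nonemptiness of the defining set
  have hne : ∃ q : ℝ, q ∈ {q : ℝ | ∃ ξ : ↥D → ℝ, (∀ i, 1 ≤ |ξ i|) ∧
      q = ξ ⬝ᵥ ((Ω.submatrix (fun i : ↥D => (i : Fin p)) (fun j : ↥D => (j : Fin p))
        - Ω.submatrix (fun i : ↥D => (i : Fin p)) (fun j : ↥F => (j : Fin p))
          * (Ω.submatrix (fun i : ↥F => (i : Fin p)) (fun j : ↥F => (j : Fin p)))⁻¹
          * Ω.submatrix (fun i : ↥F => (i : Fin p)) (fun j : ↥D => (j : Fin p))) *ᵥ ξ)} :=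
    ⟨_, ⟨fun _ => 1, fun i => by norm_num, rfl⟩⟩
  have hw0 : 0 ≤ w := by
    rw [hw]
    unfold omegaDF
    refine Real.sInf_nonneg ?_
    rintro q ⟨ξ, hξ, rfl⟩
    have hq := (posSemidef_iff_dotProduct_mulVec.mp (schur_psd Ω hpd D F hDF)).2 ξ
    simpa using hq
  by_cases hev : Even D.card
  · rw [if_pos hev]
    by_cases hsp : D.card = 2 ∧ F = ∅
    · obtain ⟨hk2, hF⟩ := hsp
      haveI : IsEmpty ↥F := Finset.isEmpty_coe_sort.mpr hF
      have hM0 : Ω.submatrix (fun i : ↥D => (i : Fin p)) (fun j : ↥F => (j : Fin p))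
          * (Ω.submatrix (fun i : ↥F => (i : Fin p)) (fun j : ↥F => (j : Fin p)))⁻¹
          * Ω.submatrix (fun i : ↥F => (i : Fin p)) (fun j : ↥D => (j : Fin p)) = 0 := by
        ext i j
        simp [Matrix.mul_apply]
      obtain ⟨xx, yy, hxy, hDxy⟩ := Finset.card_eq_two.mp hk2
      have hxD : xx ∈ D := by rw [hDxy]; simp
      have hyD : yy ∈ D := by rw [hDxy]; simp
      have hwb : 12 - 8 * s2 ≤ w := by
        rw [hw]
        unfold omegaDF
        refine le_csInf hne ?_
        rintro q ⟨ξ, hξ, rfl⟩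
        rw [hM0, sub_zero]
        set a : ↥D := ⟨xx, hxD⟩ with hadef
        set b : ↥D := ⟨yy, hyD⟩ with hbdef
        have hab : a ≠ b := fun h => hxy (congrArg Subtype.val h)
        have huniv : (Finset.univ : Finset ↥D) = {a, b} := by
          ext z
          simp only [Finset.mem_univ, true_iff, Finset.mem_insert, Finset.mem_singleton]
          have hz : (z : Fin p) ∈ ({xx, yy} : Finset (Fin p)) := by
            rw [← hDxy]; exact z.2
          rcases Finset.mem_insert.mp hz with h | h
          · exact Or.inl (Subtype.ext h)
          · exact Or.inr (Subtype.ext (Finset.mem_singleton.mp h))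
        have hval : ξ ⬝ᵥ ((Ω.submatrix (fun i : ↥D => (i : Fin p))
            (fun j : ↥D => (j : Fin p))) *ᵥ ξ)
            = ξ a * (Ω a a * ξ a + Ω a b * ξ b) + ξ b * (Ω b a * ξ a + Ω b b * ξ b) := by
          simp only [dotProduct, mulVec, submatrix_apply]
          rw [huniv, Finset.sum_pair hab, Finset.sum_pair hab, Finset.sum_pair hab]
        rw [hval]
        have hab' : (a : Fin p) ≠ (b : Fin p) := fun h => hab (Subtype.ext h)
        have h1a := hoff _ _ hab'
        have h1b := hoff _ _ (Ne.symm hab')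
        rw [hdiag, hdiag]
        have hu := hξ a
        have hv := hξ b
        have huv : 1 ≤ |ξ a| * |ξ b| := by nlinarith [abs_nonneg (ξ a)]
        have habs1 : Ω ↑a ↑b * (ξ a * ξ b) ≥ -((4 * s2 - 5) * (|ξ a| * |ξ b|)) := by
          have hh : |Ω ↑a ↑b * (ξ a * ξ b)| ≤ (4 * s2 - 5) * (|ξ a| * |ξ b|) := by
            rw [abs_mul, abs_mul]
            exact mul_le_mul h1a le_rfl (by positivity) (by nlinarith)
          linarith [neg_abs_le (Ω ↑a ↑b * (ξ a * ξ b))]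
        have habs2 : Ω ↑b ↑a * (ξ a * ξ b) ≥ -((4 * s2 - 5) * (|ξ a| * |ξ b|)) := by
          have hh : |Ω ↑b ↑a * (ξ a * ξ b)| ≤ (4 * s2 - 5) * (|ξ a| * |ξ b|) := by
            rw [abs_mul, abs_mul]
            exact mul_le_mul h1b le_rfl (by positivity) (by nlinarith)
          linarith [neg_abs_le (Ω ↑b ↑a * (ξ a * ξ b))]
        have hcoef : (0:ℝ) ≤ 12 - 8 * s2 := by nlinarith
        have hfin : (0:ℝ) ≤ (12 - 8 * s2) * (|ξ a| * |ξ b| - 1) :=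
          mul_nonneg hcoef (by linarith)
        nlinarith [sq_abs (ξ a), sq_abs (ξ b), sq_nonneg (|ξ a| - |ξ b|), habs1, habs2, hfin]
      rw [show ((D.card : ℝ) + 2 * F.card) = 2 from by rw [hk2, hF]; norm_num]
      have hA : (r - ϑ) < (2 * s2 - 2) * r := by nlinarith
      have h0A : (0:ℝ) < r - ϑ := by linarith
      have hB : (r - ϑ) ^ 2 ≤ ((2 * s2 - 2) * r) ^ 2 := by
        nlinarith [mul_lt_mul'' hA hA h0A.le h0A.le]
      have hC : ((2 * s2 - 2) * r) ^ 2 = (12 - 8 * s2) * r ^ 2 := by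
        have hq : (2 * s2 - 2) ^ 2 = 12 - 8 * s2 := by nlinarith
        calc ((2 * s2 - 2) * r) ^ 2 = (2 * s2 - 2) ^ 2 * r ^ 2 := by ring
        _ = (12 - 8 * s2) * r ^ 2 := by rw [hq]
      have hD2 : (12 - 8 * s2) * r ^ 2 ≤ w * r ^ 2 :=
        mul_le_mul_of_nonneg_right hwb (sq_nonneg r)
      rw [div_le_iff₀ hr4]
      nlinarith [hB, hC, hD2]
    · have hk4 : 4 ≤ D.card + 2 * F.card := by
        have hDpos : 0 < D.card := Finset.card_pos.mpr hD
        obtain ⟨t, ht⟩ := hev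
        have hns : ¬(D.card = 2 ∧ F.card = 0) := by
          intro ⟨hh1, hh2⟩
          exact hsp ⟨hh1, Finset.card_eq_zero.mp hh2⟩
        omega
      have hK : (4:ℝ) ≤ (D.card : ℝ) + 2 * F.card := by exact_mod_cast hk4
      rw [div_le_iff₀ hr4]
      nlinarith [h8, mul_nonneg hw0 (sq_nonneg r),
        mul_nonneg (by linarith : (0:ℝ) ≤ (D.card : ℝ) + 2 * F.card - 4) (mul_pos h0 hr).le]
  · rw [if_neg hev]
    have hodd : Odd D.card := Nat.odd_iff.mpr (Nat.not_even_iff.mp hev)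
    by_cases hsp : D.card = 1 ∧ F = ∅
    · obtain ⟨hk1, hF⟩ := hsp
      haveI : IsEmpty ↥F := Finset.isEmpty_coe_sort.mpr hF
      have hM0 : Ω.submatrix (fun i : ↥D => (i : Fin p)) (fun j : ↥F => (j : Fin p))
          * (Ω.submatrix (fun i : ↥F => (i : Fin p)) (fun j : ↥F => (j : Fin p)))⁻¹
          * Ω.submatrix (fun i : ↥F => (i : Fin p)) (fun j : ↥D => (j : Fin p)) = 0 := by
        ext i j
        simp [Matrix.mul_apply]
      have hcard1 : Fintype.card ↥D = 1 := by rw [Fintype.card_coe]; exact hk1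
      obtain ⟨a, ha⟩ := Fintype.card_eq_one_iff.mp hcard1
      have hwb : 1 ≤ w := by
        rw [hw]
        unfold omegaDF
        refine le_csInf hne ?_
        rintro q ⟨ξ, hξ, rfl⟩
        rw [hM0, sub_zero]
        have huniv : (Finset.univ : Finset ↥D) = {a} := by
          ext z
          simp [ha z]
        have hval : ξ ⬝ᵥ ((Ω.submatrix (fun i : ↥D => (i : Fin p))
            (fun j : ↥D => (j : Fin p))) *ᵥ ξ) = ξ a * (Ω a a * ξ a) := by
          simp only [dotProduct, mulVec, submatrix_apply]
          rw [huniv, Finset.sum_singleton, Finset.sum_singleton]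
        rw [hval, hdiag]
        nlinarith [hξ a, sq_abs (ξ a), abs_nonneg (ξ a)]
      have hwr : r ≤ w * r := by nlinarith
      have hwrpos : (0:ℝ) < w * r := by nlinarith
      set s := Real.sqrt (w * r) with hsdef
      have hspos : 0 < s := Real.sqrt_pos.mpr hwrpos
      have hssq : s ^ 2 = w * r := Real.sq_sqrt hwrpos.le
      clear_value s
      have hmax : max (s - ϑ / s) 0 = s - ϑ / s := by
        refine max_eq_left ?_
        have hds : ϑ / s < s := by rw [div_lt_iff₀ hspos]; nlinarith
        linarith
      rw [show ((D.card : ℝ) + 2 * F.card) = 1 from by rw [hk1, hF]; norm_num, hmax]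
      have hsq : (s - ϑ / s) ^ 2 = (w * r - ϑ) ^ 2 / (w * r) := by
        rw [show s - ϑ / s = (s ^ 2 - ϑ) / s from by field_simp, div_pow, hssq]
      rw [hsq]
      have hww : (0:ℝ) ≤ w * r * r - ϑ ^ 2 := by
        nlinarith [mul_nonneg (sub_nonneg.mpr hwr) hr.le]
      have key : (r - ϑ) ^ 2 / r ≤ (w * r - ϑ) ^ 2 / (w * r) := by
        rw [div_le_div_iff₀ hr hwrpos]
        nlinarith [mul_nonneg (sub_nonneg.mpr hwr) hww]
      have expand : (ϑ + r) ^ 2 / (4 * r) = ϑ + (r - ϑ) ^ 2 / (4 * r) := by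
        field_simp
        ring
      rw [expand]
      have hstep : (r - ϑ) ^ 2 / (4 * r) ≤ (w * r - ϑ) ^ 2 / (w * r) / 4 := by
        calc (r - ϑ) ^ 2 / (4 * r) = ((r - ϑ) ^ 2 / r) / 4 := by ring
        _ ≤ ((w * r - ϑ) ^ 2 / (w * r)) / 4 := by linarith
      linarith
    · have hk3 : 3 ≤ D.card + 2 * F.card := by
        obtain ⟨t, ht⟩ := hodd
        have hns : ¬(D.card = 1 ∧ F.card = 0) := by
          intro ⟨hh1, hh2⟩
          exact hsp ⟨hh1, Finset.card_eq_zero.mp hh2⟩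
        omega
      have hK : (3:ℝ) ≤ (D.card : ℝ) + 2 * F.card := by exact_mod_cast hk3
      have hmax0 : 0 ≤ (max (Real.sqrt (w * r) - ϑ / Real.sqrt (w * r)) 0) ^ 2 / 4 := by
        positivity
      have h2t : (ϑ + r) ^ 2 / (4 * r) ≤ 2 * ϑ := by
        rw [div_le_iff₀ hr4]
        nlinarith
      nlinarith [mul_nonneg (by linarith : (0:ℝ) ≤ (D.card : ℝ) + 2 * F.card - 3) h0.le]
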